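/- In ℂ³ ⊗ ℂ⁴ ⊗ ℂ⁵, the set S = S₁ ∪ S₂ ∪ S₃ ∪ S₄ with S₁ = {(|0,i,j+1⟩ ± |2,i+1,j⟩)/√2 : i ∈ {0,1,2}, j ∈ {0,1,2,3}}, S₂ = {(|i+1,0,j⟩ ± |i,3,j+1⟩)/√2 : i ∈ {0,1}, j ∈ {0,1,2,3}}, S₃ = {(|i,j+1,0⟩ ± |i+1,j,4⟩)/√2 : i ∈ {0,1}, j ∈ {0,1,2}}, S₄ = {(|0,0,0⟩ ± |2,3,4⟩)/√2} consists of pairwise orthogonal unit vectors, each of which is genuinely entangled (entangled across all three bipartitions). -/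

import Mathlib

noncomputable def ket345 (a : Fin 3) (b : Fin 4) (c : Fin 5) :
    EuclideanSpace ℂ (Fin 3 × Fin 4 × Fin 5) :=
  EuclideanSpace.single (a, b, c) 1

noncomputable def S345 : Set (EuclideanSpace ℂ (Fin 3 × Fin 4 × Fin 5)) :=
  {v | ∃ ε : ℂ, (ε = 1 ∨ ε = -1) ∧
    ((∃ (i : Fin 3) (j : Fin 4), v = (Real.sqrt 2 : ℂ)⁻¹ •
        (ket345 0 i.castSucc j.succ + ε • ket345 2 i.succ j.castSucc)) ∨
     (∃ (i : Fin 2) (j : Fin 4), v = (Real.sqrt 2 : ℂ)⁻¹ •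
        (ket345 i.succ 0 j.castSucc + ε • ket345 i.castSucc 3 j.succ)) ∨
     (∃ (i : Fin 2) (j : Fin 3), v = (Real.sqrt 2 : ℂ)⁻¹ •
        (ket345 i.castSucc j.succ 0 + ε • ket345 i.succ j.castSucc 4)) ∨
     v = (Real.sqrt 2 : ℂ)⁻¹ • (ket345 0 0 0 + ε • ket345 2 3 4))}

namespace Stmt16Aux

set_option maxRecDepth 10000

abbrev I3 := Fin 3 × Fin 4 × Fin 5

open ComplexConjugate

noncomputable abbrev sk (x : I3) : EuclideanSpace ℂ I3 := EuclideanSpace.single x 1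

def pairList : List (I3 × I3) :=
  [((0, 0, 1), (2, 1, 0)),
   ((0, 0, 2), (2, 1, 1)),
   ((0, 0, 3), (2, 1, 2)),
   ((0, 0, 4), (2, 1, 3)),
   ((0, 1, 1), (2, 2, 0)),
   ((0, 1, 2), (2, 2, 1)),
   ((0, 1, 3), (2, 2, 2)),
   ((0, 1, 4), (2, 2, 3)),
   ((0, 2, 1), (2, 3, 0)),
   ((0, 2, 2), (2, 3, 1)),
   ((0, 2, 3), (2, 3, 2)),
   ((0, 2, 4), (2, 3, 3)),
   ((1, 0, 0), (0, 3, 1)),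
   ((1, 0, 1), (0, 3, 2)),
   ((1, 0, 2), (0, 3, 3)),
   ((1, 0, 3), (0, 3, 4)),
   ((2, 0, 0), (1, 3, 1)),
   ((2, 0, 1), (1, 3, 2)),
   ((2, 0, 2), (1, 3, 3)),
   ((2, 0, 3), (1, 3, 4)),
   ((0, 1, 0), (1, 0, 4)),
   ((0, 2, 0), (1, 1, 4)),
   ((0, 3, 0), (1, 2, 4)),
   ((1, 1, 0), (2, 0, 4)),
   ((1, 2, 0), (2, 1, 4)),
   ((1, 3, 0), (2, 2, 4)),
   ((0, 0, 0), (2, 3, 4))]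

lemma pair_coords : ∀ p ∈ pairList,
    p.1.1 ≠ p.2.1 ∧ p.1.2.1 ≠ p.2.2.1 ∧ p.1.2.2 ≠ p.2.2.2 := by
  have h : pairList.all (fun p =>
      decide (p.1.1 ≠ p.2.1 ∧ p.1.2.1 ≠ p.2.2.1 ∧ p.1.2.2 ≠ p.2.2.2)) = true := by rfl
  intro p hp; exact of_decide_eq_true (List.all_eq_true.mp h p hp)

lemma pair_disj : ∀ p ∈ pairList, ∀ q ∈ pairList,
    p = q ∨ (p.1 ≠ q.1 ∧ p.1 ≠ q.2 ∧ p.2 ≠ q.1 ∧ p.2 ≠ q.2) := by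
  have h : pairList.all (fun p => pairList.all (fun q =>
      decide (p = q ∨ (p.1 ≠ q.1 ∧ p.1 ≠ q.2 ∧ p.2 ≠ q.1 ∧ p.2 ≠ q.2)))) = true := by rfl
  intro p hp q hq
  exact of_decide_eq_true (List.all_eq_true.mp (List.all_eq_true.mp h p hp) q hq)

lemma mem1 : ∀ (i : Fin 3) (j : Fin 4),
    (((0 : Fin 3), i.castSucc, j.succ), ((2 : Fin 3), i.succ, j.castSucc)) ∈ pairList := by decide
lemma mem2 : ∀ (i : Fin 2) (j : Fin 4),
    ((i.succ, (0 : Fin 4), j.castSucc), (i.castSucc, (3 : Fin 4), j.succ)) ∈ pairList := by decide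
lemma mem3 : ∀ (i : Fin 2) (j : Fin 3),
    ((i.castSucc, j.succ, (0 : Fin 5)), (i.succ, j.castSucc, (4 : Fin 5))) ∈ pairList := by decide
lemma mem4 : ((((0:Fin 3),(0:Fin 4),(0:Fin 5)) : I3), (((2:Fin 3),(3:Fin 4),(4:Fin 5)) : I3))
    ∈ pairList := by decide

lemma apply_eq (x y : I3) (ε : ℂ) (p : I3) :
    ((Real.sqrt 2 : ℂ)⁻¹ • (sk x + ε • sk y)) p
      = (Real.sqrt 2 : ℂ)⁻¹ * ((if p = x then 1 else 0) + ε * (if p = y then 1 else 0)) := by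
  simp [sk, EuclideanSpace.single_apply, PiLp.smul_apply, PiLp.add_apply, smul_eq_mul]
  split_ifs <;> ring

lemma c_ne : (Real.sqrt 2 : ℂ)⁻¹ ≠ 0 := by
  simp [Complex.ofReal_ne_zero, Real.sqrt_eq_zero']

lemma eps_norm {ε : ℂ} (hε : ε = 1 ∨ ε = -1) : ‖ε‖ = 1 := by rcases hε with rfl | rfl <;> simp

lemma eps_ne {ε : ℂ} (hε : ε = 1 ∨ ε = -1) : ε ≠ 0 := by rcases hε with rfl | rfl <;> norm_num

lemma eps_mul {ε₁ ε₂ : ℂ} (h₁ : ε₁ = 1 ∨ ε₁ = -1) (h₂ : ε₂ = 1 ∨ ε₂ = -1) (hne : ε₁ ≠ ε₂) :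
    conj ε₁ * ε₂ = -1 := by
  rcases h₁ with rfl | rfl <;> rcases h₂ with rfl | rfl <;> simp_all

lemma norm_eq (x y : I3) (ε : ℂ) (hxy : x ≠ y) (hε : ‖ε‖ = 1) :
    ‖(Real.sqrt 2 : ℂ)⁻¹ • (sk x + ε • sk y)‖ = 1 := by
  have hyx := Ne.symm hxy
  have h0 : (inner ℂ (sk x) (ε • sk y) : ℂ) = 0 := by
    simp [sk, inner_smul_right, EuclideanSpace.inner_single_left,
      EuclideanSpace.single_apply, hxy, hyx]
  have h1 : ‖sk x + ε • sk y‖ ^ 2 = 2 := by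
    rw [norm_add_sq (𝕜 := ℂ)]
    simp [h0, sk, EuclideanSpace.norm_single, norm_smul, hε]
    ring
  have h2 : ‖sk x + ε • sk y‖ = Real.sqrt 2 := by
    rw [← Real.sqrt_sq (norm_nonneg _), h1]
  rw [norm_smul, h2]
  have h3 : ‖((Real.sqrt 2 : ℝ) : ℂ)⁻¹‖ = (Real.sqrt 2)⁻¹ := by
    simp [Complex.norm_real, Real.norm_eq_abs, abs_of_nonneg (Real.sqrt_nonneg 2)]
  rw [h3, inv_mul_cancel₀ (by positivity)]

lemma inner_eq (x₁ y₁ x₂ y₂ : I3) (ε₁ ε₂ : ℂ)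
    (h : (x₁ = x₂ ∧ y₁ = y₂ ∧ x₁ ≠ y₁ ∧ conj ε₁ * ε₂ = -1) ∨
         (x₁ ≠ x₂ ∧ x₁ ≠ y₂ ∧ y₁ ≠ x₂ ∧ y₁ ≠ y₂)) :
    (inner ℂ ((Real.sqrt 2 : ℂ)⁻¹ • (sk x₁ + ε₁ • sk y₁))
           ((Real.sqrt 2 : ℂ)⁻¹ • (sk x₂ + ε₂ • sk y₂)) : ℂ) = 0 := by
  rcases h with ⟨rfl, rfl, hxy, hee⟩ | ⟨h1, h2, h3, h4⟩
  · have hyx := Ne.symm hxy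
    simp only [sk, inner_add_left, inner_add_right, inner_smul_left, inner_smul_right,
      EuclideanSpace.inner_single_left, EuclideanSpace.single_apply]
    simp [hxy, hyx]
    linear_combination ((Real.sqrt 2 : ℂ)⁻¹) * hee
  · have h1' := Ne.symm h1; have h2' := Ne.symm h2
    have h3' := Ne.symm h3; have h4' := Ne.symm h4
    simp [sk, inner_add_left, inner_add_right, inner_smul_left, inner_smul_right,
      EuclideanSpace.inner_single_left, EuclideanSpace.single_apply,
      h1, h2, h3, h4, h1', h2', h3', h4']

lemma nosep1 (a1 a2 : Fin 3) (b1 b2 : Fin 4) (c1 c2 : Fin 5) (ε : ℂ) (hε : ε = 1 ∨ ε = -1)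
    (ha : a1 ≠ a2) (hb : b1 ≠ b2) :
    ¬ ∃ (f : Fin 3 → ℂ) (g : Fin 4 × Fin 5 → ℂ), ∀ a b c,
      ((Real.sqrt 2 : ℂ)⁻¹ • (sk (a1,b1,c1) + ε • sk (a2,b2,c2))) (a, b, c) = f a * g (b, c) := by
  rintro ⟨f, g, hfg⟩
  have e1 : ((a1,b1,c1) : I3) ≠ (a2,b2,c2) := fun h => ha (congrArg Prod.fst h)
  have e2 : ((a1,b2,c2) : I3) ≠ (a1,b1,c1) :=
    fun h => hb ((congrArg (fun p : I3 => p.2.1) h).symm)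
  have e3 : ((a1,b2,c2) : I3) ≠ (a2,b2,c2) := fun h => ha (congrArg Prod.fst h)
  have h1 := hfg a1 b1 c1
  have h2 := hfg a2 b2 c2
  have h3 := hfg a1 b2 c2
  rw [apply_eq] at h1 h2 h3
  rw [if_pos rfl, if_neg e1] at h1
  rw [if_neg (Ne.symm e1), if_pos rfl] at h2
  rw [if_neg e2, if_neg e3] at h3
  simp only [mul_zero, mul_one, add_zero, zero_add] at h1 h2 h3
  have hf : f a1 ≠ 0 := left_ne_zero_of_mul (h1.symm ▸ c_ne)
  have hg : g (b2, c2) ≠ 0 :=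
    right_ne_zero_of_mul (h2.symm ▸ mul_ne_zero c_ne (eps_ne hε))
  exact mul_ne_zero hf hg h3.symm

lemma nosep2 (a1 a2 : Fin 3) (b1 b2 : Fin 4) (c1 c2 : Fin 5) (ε : ℂ) (hε : ε = 1 ∨ ε = -1)
    (ha : a1 ≠ a2) (hb : b1 ≠ b2) :
    ¬ ∃ (f : Fin 4 → ℂ) (g : Fin 3 × Fin 5 → ℂ), ∀ a b c,
      ((Real.sqrt 2 : ℂ)⁻¹ • (sk (a1,b1,c1) + ε • sk (a2,b2,c2))) (a, b, c) = f b * g (a, c) := by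
  rintro ⟨f, g, hfg⟩
  have e1 : ((a1,b1,c1) : I3) ≠ (a2,b2,c2) := fun h => ha (congrArg Prod.fst h)
  have e2 : ((a2,b1,c2) : I3) ≠ (a1,b1,c1) :=
    fun h => ha ((congrArg Prod.fst h).symm)
  have e3 : ((a2,b1,c2) : I3) ≠ (a2,b2,c2) := fun h => hb (congrArg (fun p : I3 => p.2.1) h)
  have h1 := hfg a1 b1 c1
  have h2 := hfg a2 b2 c2
  have h3 := hfg a2 b1 c2
  rw [apply_eq] at h1 h2 h3
  rw [if_pos rfl, if_neg e1] at h1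
  rw [if_neg (Ne.symm e1), if_pos rfl] at h2
  rw [if_neg e2, if_neg e3] at h3
  simp only [mul_zero, mul_one, add_zero, zero_add] at h1 h2 h3
  have hf : f b1 ≠ 0 := left_ne_zero_of_mul (h1.symm ▸ c_ne)
  have hg : g (a2, c2) ≠ 0 :=
    right_ne_zero_of_mul (h2.symm ▸ mul_ne_zero c_ne (eps_ne hε))
  exact mul_ne_zero hf hg h3.symm

lemma nosep3 (a1 a2 : Fin 3) (b1 b2 : Fin 4) (c1 c2 : Fin 5) (ε : ℂ) (hε : ε = 1 ∨ ε = -1)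
    (ha : a1 ≠ a2) (hc : c1 ≠ c2) :
    ¬ ∃ (f : Fin 5 → ℂ) (g : Fin 3 × Fin 4 → ℂ), ∀ a b c,
      ((Real.sqrt 2 : ℂ)⁻¹ • (sk (a1,b1,c1) + ε • sk (a2,b2,c2))) (a, b, c) = f c * g (a, b) := by
  rintro ⟨f, g, hfg⟩
  have e1 : ((a1,b1,c1) : I3) ≠ (a2,b2,c2) := fun h => ha (congrArg Prod.fst h)
  have e2 : ((a2,b2,c1) : I3) ≠ (a1,b1,c1) :=
    fun h => ha ((congrArg Prod.fst h).symm)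
  have e3 : ((a2,b2,c1) : I3) ≠ (a2,b2,c2) := fun h => hc (congrArg (fun p : I3 => p.2.2) h)
  have h1 := hfg a1 b1 c1
  have h2 := hfg a2 b2 c2
  have h3 := hfg a2 b2 c1
  rw [apply_eq] at h1 h2 h3
  rw [if_pos rfl, if_neg e1] at h1
  rw [if_neg (Ne.symm e1), if_pos rfl] at h2
  rw [if_neg e2, if_neg e3] at h3
  simp only [mul_zero, mul_one, add_zero, zero_add] at h1 h2 h3
  have hf : f c1 ≠ 0 := left_ne_zero_of_mul (h1.symm ▸ c_ne)
  have hg : g (a2, b2) ≠ 0 :=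
    right_ne_zero_of_mul (h2.symm ▸ mul_ne_zero c_ne (eps_ne hε))
  exact mul_ne_zero hf hg h3.symm

lemma extract {v : EuclideanSpace ℂ I3} (hv : v ∈ S345) :
    ∃ ε : ℂ, (ε = 1 ∨ ε = -1) ∧ ∃ p ∈ pairList,
      v = (Real.sqrt 2 : ℂ)⁻¹ • (sk p.1 + ε • sk p.2) := by
  obtain ⟨ε, hε, h⟩ := hv
  refine ⟨ε, hε, ?_⟩
  rcases h with ⟨i, j, rfl⟩ | ⟨i, j, rfl⟩ | ⟨i, j, rfl⟩ | rfl
  · exact ⟨_, mem1 i j, rfl⟩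
  · exact ⟨_, mem2 i j, rfl⟩
  · exact ⟨_, mem3 i j, rfl⟩
  · exact ⟨_, mem4, rfl⟩

end Stmt16Aux

open Stmt16Aux in
theorem stmt_16 :
    ∀ v ∈ S345, ‖v‖ = 1 ∧
      (∀ w ∈ S345, v ≠ w → (inner ℂ v w : ℂ) = 0) ∧
      (¬ ∃ (f : Fin 3 → ℂ) (g : Fin 4 × Fin 5 → ℂ),
          ∀ a b c, v (a, b, c) = f a * g (b, c)) ∧
      (¬ ∃ (f : Fin 4 → ℂ) (g : Fin 3 × Fin 5 → ℂ),
          ∀ a b c, v (a, b, c) = f b * g (a, c)) ∧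
      (¬ ∃ (f : Fin 5 → ℂ) (g : Fin 3 × Fin 4 → ℂ),
          ∀ a b c, v (a, b, c) = f c * g (a, b)) := by
  intro v hv
  obtain ⟨ε, hε, p, hp, rfl⟩ := extract hv
  obtain ⟨ha, hb, hc⟩ := pair_coords p hp
  refine ⟨norm_eq _ _ _ (fun h => ha (congrArg Prod.fst h)) (eps_norm hε), ?_, ?_, ?_, ?_⟩
  · intro w hw hne
    obtain ⟨ε', hε', q, hq, rfl⟩ := extract hw
    rcases pair_disj p hp q hq with rfl | hd
    · by_cases hee : ε = ε'
      · exact absurd (by rw [hee]) hne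
      · exact inner_eq _ _ _ _ _ _
          (Or.inl ⟨rfl, rfl, fun h => ha (congrArg Prod.fst h), eps_mul hε hε' hee⟩)
    · exact inner_eq _ _ _ _ _ _ (Or.inr hd)
  · obtain ⟨⟨a1, b1, c1⟩, ⟨a2, b2, c2⟩⟩ := p
    exact nosep1 a1 a2 b1 b2 c1 c2 ε hε ha hb
  · obtain ⟨⟨a1, b1, c1⟩, ⟨a2, b2, c2⟩⟩ := p
    exact nosep2 a1 a2 b1 b2 c1 c2 ε hε ha hb
  · obtain ⟨⟨a1, b1, c1⟩, ⟨a2, b2, c2⟩⟩ := p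
    exact nosep3 a1 a2 b1 b2 c1 c2 ε hε ha hc
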